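/- Let R be a commutative ring, M a Baer R-module of projective dimension at most 1, and N a submodule of M with pd_R(M/N) ≤ 1 (a tight submodule). Then N is a Baer module. -/

import Mathlib

open CategoryTheory Limits Function LinearMap

universe u

variable {R : Type u} [CommRing R]

theorem projective_prod {A B : Type u} [AddCommGroup A] [Module R A]
    [AddCommGroup B] [Module R B] [Module.Projective R A] [Module.Projective R B] :
    Module.Projective R (A × B) := by
  obtain ⟨sA, hsA⟩ := Module.projective_lifting_property
    (Finsupp.linearCombination R (_root_.id : A → A)) (LinearMap.id : A →ₗ[R] A)
    (fun a => ⟨Finsupp.single a 1, by simp⟩)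
  obtain ⟨sB, hsB⟩ := Module.projective_lifting_property
    (Finsupp.linearCombination R (_root_.id : B → B)) (LinearMap.id : B →ₗ[R] B)
    (fun b => ⟨Finsupp.single b 1, by simp⟩)
  refine Module.Projective.of_split
    (M := (A × B) →₀ R)
    ((Finsupp.lmapDomain R R (LinearMap.inl R A B)).comp (sA.comp (LinearMap.fst R A B)) +
     (Finsupp.lmapDomain R R (LinearMap.inr R A B)).comp (sB.comp (LinearMap.snd R A B)))
    (Finsupp.linearCombination R _root_.id) ?_
  apply LinearMap.ext
  rintro ⟨a, b⟩
  have hA : (Finsupp.linearCombination R (_root_.id : A → A)) (sA a) = a :=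
    congrArg (fun f => f a) hsA
  have hB : (Finsupp.linearCombination R (_root_.id : B → B)) (sB b) = b :=
    congrArg (fun f => f b) hsB
  simp only [LinearMap.comp_apply, LinearMap.add_apply, map_add, LinearMap.id_apply,
    Finsupp.lmapDomain_apply, Finsupp.linearCombination_mapDomain, LinearMap.fst_apply,
    LinearMap.snd_apply]
  have e1 : Finsupp.linearCombination R (_root_.id ∘ ⇑(LinearMap.inl R A B)) (sA a)
      = LinearMap.inl R A B a := by
    rw [show (_root_.id ∘ ⇑(LinearMap.inl R A B)) = ⇑(LinearMap.inl R A B) from rfl,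
      ← Finsupp.apply_linearCombination_id, hA]
  have e2 : Finsupp.linearCombination R (_root_.id ∘ ⇑(LinearMap.inr R A B)) (sB b)
      = LinearMap.inr R A B b := by
    rw [show (_root_.id ∘ ⇑(LinearMap.inr R A B)) = ⇑(LinearMap.inr R A B) from rfl,
      ← Finsupp.apply_linearCombination_id, hB]
  rw [e1, e2]
  simp

theorem extend_transfer {X P P' T : Type u}
    [AddCommGroup X] [Module R X] [AddCommGroup P] [Module R P]
    [AddCommGroup P'] [Module R P'] [AddCommGroup T] [Module R T]
    [Module.Projective R P] [Module.Projective R P']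
    (p : P →ₗ[R] X) (p' : P' →ₗ[R] X)
    (hp : Surjective p) (hp' : Surjective p')
    (hext : ∀ φ : ↥(ker p') →ₗ[R] T, ∃ ψ : P' →ₗ[R] T, ∀ x : ker p', ψ x = φ x)
    (φ : ↥(ker p) →ₗ[R] T) : ∃ ψ : P →ₗ[R] T, ∀ x : ker p, ψ x = φ x := by
  obtain ⟨α, hα⟩ := Module.projective_lifting_property p' p hp'
  obtain ⟨β, hβ⟩ := Module.projective_lifting_property p p' hp
  have hαk : ∀ x ∈ ker p, α x ∈ ker p' := by
    intro x hx
    simp only [mem_ker] at hx ⊢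
    rw [← LinearMap.comp_apply, hα, hx]
  have hβk : ∀ x ∈ ker p', β x ∈ ker p := by
    intro x hx
    simp only [mem_ker] at hx ⊢
    rw [← LinearMap.comp_apply, hβ, hx]
  have hγ : ∀ x : P, x - β (α x) ∈ ker p := by
    intro x
    simp only [mem_ker, map_sub]
    rw [← LinearMap.comp_apply, ← LinearMap.comp_apply, hβ, hα, sub_self]
  let γ : P →ₗ[R] ↥(ker p) := codRestrict (ker p) (LinearMap.id - β.comp α) hγ
  obtain ⟨ψ', hψ'⟩ := hext (φ.comp (β.restrict hβk))
  refine ⟨ψ'.comp α + φ.comp γ, ?_⟩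
  rintro ⟨x, hx⟩
  have h1 : ψ' (α x) = φ ⟨β (α x), hβk _ (hαk x hx)⟩ := hψ' ⟨α x, hαk x hx⟩
  simp only [LinearMap.add_apply, LinearMap.comp_apply, h1]
  rw [← map_add]
  congr 1
  apply Subtype.ext
  simp [γ, codRestrict]

theorem proj_ker_of_pullback {F P Q : Type u}
    [AddCommGroup F] [Module R F] [AddCommGroup P] [Module R P]
    [AddCommGroup Q] [Module R Q]
    [Module.Projective R F] [Module.Projective R P]
    (q1 : F →ₗ[R] Q) (q2 : P →ₗ[R] Q) (h1 : Surjective q1) (h2 : Surjective q2)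
    (hk2 : Module.Projective R ↥(ker q2)) :
    Module.Projective R ↥(ker q1) := by
  set E : Submodule R (F × P) := ker (q1.comp (fst R F P) - q2.comp (snd R F P)) with hE
  have memE : ∀ ab : F × P, ab ∈ E ↔ q1 ab.1 = q2 ab.2 := by
    intro ab
    simp [hE, mem_ker, sub_eq_zero]
  let π₁ : ↥E →ₗ[R] F := (fst R F P).comp E.subtype
  let π₂ : ↥E →ₗ[R] P := (snd R F P).comp E.subtype
  have hπ₁ : Surjective π₁ := by
    intro a
    obtain ⟨b, hb⟩ := h2 (q1 a)
    exact ⟨⟨(a, b), (memE (a, b)).2 hb.symm⟩, rfl⟩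
  have hπ₂ : Surjective π₂ := by
    intro b
    obtain ⟨a, ha⟩ := h1 (q2 b)
    exact ⟨⟨(a, b), (memE (a, b)).2 ha⟩, rfl⟩
  obtain ⟨s₁, hs₁⟩ := Module.projective_lifting_property π₁ LinearMap.id hπ₁
  obtain ⟨s₂, hs₂⟩ := Module.projective_lifting_property π₂ LinearMap.id hπ₂
  have hs₁' : ∀ a, π₁ (s₁ a) = a := fun a => congrArg (fun f => f a) hs₁
  have hs₂' : ∀ b, π₂ (s₂ b) = b := fun b => congrArg (fun f => f b) hs₂
  -- E is projective
  have hEproj : Module.Projective R ↥E := by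
    have hmem : ∀ e : ↥E, (((e : F × P) - (s₁ (π₁ e) : F × P)).2) ∈ ker q2 := by
      intro e
      have h0 : ((e : F × P) - (s₁ (π₁ e) : F × P)).1 = 0 := by
        have := hs₁' (π₁ e)
        show (e : F × P).1 - (s₁ (π₁ e) : F × P).1 = 0
        rw [sub_eq_zero]
        exact this.symm
      have hmE := ((memE _).1 (Submodule.sub_mem E e.2 (s₁ (π₁ e)).2))
      refine mem_ker.2 ?_
      rw [← hmE]
      show q1 (((e:F×P) - (s₁ (π₁ e) : F×P)).1) = 0
      rw [h0, map_zero]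
    let to_ : ↥E →ₗ[R] F × ↥(ker q2) :=
      LinearMap.prod π₁
        (codRestrict (ker q2) ((snd R F P).comp (E.subtype.comp
          ((LinearMap.id : ↥E →ₗ[R] ↥E) - s₁.comp π₁))) (by
            intro e
            exact hmem e))
    let inv_ : F × ↥(ker q2) →ₗ[R] ↥E :=
      s₁.comp (LinearMap.fst R F ↥(ker q2)) +
      (codRestrict E ((LinearMap.inr R F P).comp ((ker q2).subtype.comp
        (LinearMap.snd R F ↥(ker q2)))) (by
          rintro ⟨a, k⟩
          refine (memE _).2 ?_
          show q1 0 = q2 (k : P)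
          rw [map_zero, (mem_ker).1 k.2]))
    have hsplit : inv_.comp to_ = LinearMap.id := by
      apply LinearMap.ext
      intro e
      apply Subtype.ext
      show ((s₁ (π₁ e) : F × P) + ((0 : F), ((e : F × P) - (s₁ (π₁ e) : F × P)).2)) = (e : F × P)
      have h0 : ((e : F × P) - (s₁ (π₁ e) : F × P)).1 = 0 := by
        show (e : F × P).1 - (s₁ (π₁ e) : F × P).1 = 0
        rw [sub_eq_zero]
        exact (hs₁' (π₁ e)).symm
      ext
      · show (s₁ (π₁ e) : F × P).1 + 0 = (e : F × P).1
        have := sub_eq_zero.1 h0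
        rw [add_zero, this]
      · show (s₁ (π₁ e) : F × P).2 + ((e : F × P).2 - (s₁ (π₁ e) : F × P).2) = (e : F × P).2
        abel
    have : Module.Projective R (F × ↥(ker q2)) := projective_prod
    exact Module.Projective.of_split to_ inv_ hsplit
  -- ker q1 is a split submodule of E
  let i' : ↥(ker q1) →ₗ[R] ↥E :=
    codRestrict E ((LinearMap.inl R F P).comp (ker q1).subtype) (by
      rintro ⟨a, ha⟩
      refine (memE _).2 ?_
      show q1 a = q2 0
      rw [map_zero, (mem_ker).1 ha])
  let r : ↥E →ₗ[R] ↥(ker q1) :=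
    codRestrict (ker q1) ((fst R F P).comp (E.subtype.comp
      ((LinearMap.id : ↥E →ₗ[R] ↥E) - s₂.comp π₂))) (by
        intro e
        have h0 : ((e : F × P) - (s₂ (π₂ e) : F × P)).2 = 0 := by
          show (e : F × P).2 - (s₂ (π₂ e) : F × P).2 = 0
          rw [sub_eq_zero]
          exact (hs₂' (π₂ e)).symm
        have hmE := ((memE _).1 (Submodule.sub_mem E e.2 (s₂ (π₂ e)).2))
        refine mem_ker.2 ?_
        show q1 (((e:F×P) - (s₂ (π₂ e) : F×P)).1) = 0
        rw [hmE, h0, map_zero])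
  have hsplit' : r.comp i' = LinearMap.id := by
    apply LinearMap.ext
    rintro ⟨a, ha⟩
    apply Subtype.ext
    have hz : π₂ (i' ⟨a, ha⟩) = 0 := rfl
    show (((i' ⟨a, ha⟩ : ↥E) : F × P) - (s₂ (π₂ (i' ⟨a, ha⟩)) : F × P)).1 = a
    rw [hz, map_zero]
    show ((a, (0:P)) - ((0:↥E) : F × P)).1 = a
    simp
  exact Module.Projective.of_split i' r hsplit'

section
variable (X Y : ModuleCat.{u} R) (P : ProjectiveResolution X)

theorem bridge (n : ℕ) :
    Subsingleton (((Ext R (ModuleCat.{u} R) n).obj (Opposite.op X)).obj Y) ↔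
    (P.complex.linearYonedaObj R Y).ExactAt n := by
  rw [HomologicalComplex.exactAt_iff_isZero_homology]
  have e := P.isoExt (R := R) n Y
  constructor
  · intro h
    have : Subsingleton ((P.complex.linearYonedaObj R Y).homology n : Type u) :=
      Equiv.subsingleton e.toLinearEquiv.toEquiv.symm
    exact ModuleCat.isZero_of_subsingleton _
  · intro h
    have h2 : IsZero (((Ext R (ModuleCat.{u} R) n).obj (Opposite.op X)).obj Y) := h.of_iso e
    have hid : 𝟙 (((Ext R (ModuleCat.{u} R) n).obj (Opposite.op X)).obj Y) = 0 :=
      h2.eq_of_src _ _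
    constructor
    intro a b
    have hz : ∀ x : (((Ext R (ModuleCat.{u} R) n).obj (Opposite.op X)).obj Y),
        x = (0 : (((Ext R (ModuleCat.{u} R) n).obj (Opposite.op X)).obj Y)) := by
      intro x
      have := congrArg (fun f => f.hom x) hid
      simpa using this
    rw [hz a, hz b]

theorem concrete (K : ChainComplex (ModuleCat.{u} R) ℕ) (n : ℕ) :
    (K.linearYonedaObj R Y).ExactAt (n+1) ↔
    ∀ f : K.X (n+1) ⟶ Y, K.d (n+2) (n+1) ≫ f = 0 →
      ∃ g : K.X n ⟶ Y, K.d (n+1) n ≫ g = f := by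
  rw [HomologicalComplex.exactAt_iff' (K.linearYonedaObj R Y) n (n+1) (n+2)
    (by simp) (by simp)]
  rw [ShortComplex.moduleCat_exact_iff]
  rfl

theorem subsingleton_ext_iff (n : ℕ) :
    Subsingleton (((Ext R (ModuleCat.{u} R) (n+1)).obj (Opposite.op X)).obj Y) ↔
    ∀ f : P.complex.X (n+1) ⟶ Y, P.complex.d (n+2) (n+1) ≫ f = 0 →
      ∃ g : P.complex.X n ⟶ Y, P.complex.d (n+1) n ≫ g = f :=
  (bridge X Y P (n+1)).trans (concrete Y P.complex n)

-- range / kernel facts for the resolution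
theorem res_range_d10 :
    range ((P.complex.d 1 0).hom : ↑(P.complex.X 1) →ₗ[R] ↑(P.complex.X 0)) =
    ker ((P.π.f 0).hom : ↑(P.complex.X 0) →ₗ[R] ↑X) := by
  apply le_antisymm
  · rintro x ⟨y, rfl⟩
    exact mem_ker.2 (congrArg (fun f => f.hom y) P.complex_d_comp_π_f_zero)
  · intro x hx
    have := (ShortComplex.moduleCat_exact_iff _).1 P.exact₀ x (mem_ker.1 hx)
    exact this

theorem res_range_d_succ (n : ℕ) :
    range ((P.complex.d (n+2) (n+1)).hom : ↑(P.complex.X (n+2)) →ₗ[R] ↑(P.complex.X (n+1))) =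
    ker ((P.complex.d (n+1) n).hom : ↑(P.complex.X (n+1)) →ₗ[R] ↑(P.complex.X n)) := by
  apply le_antisymm
  · rintro x ⟨y, rfl⟩
    exact mem_ker.2 (congrArg (fun f => f.hom y) (P.complex.d_comp_d (n+2) (n+1) n))
  · intro x hx
    exact (ShortComplex.moduleCat_exact_iff _).1 (P.exact_succ n) x (mem_ker.1 hx)

theorem surj_pi0 : Surjective ((P.π.f 0).hom : ↑(P.complex.X 0) →ₗ[R] ↑X) :=
  (ModuleCat.epi_iff_surjective _).1 inferInstance

theorem module_projective_res (n : ℕ) :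
    Module.Projective R ↑(P.complex.X n) := by
  have h := P.projective n
  exact (IsProjective.iff_projective (R := R) (P := ↑(P.complex.X n))).2 h
end

noncomputable def descend {A B T : Type u} [AddCommGroup A] [Module R A]
    [AddCommGroup B] [Module R B] [AddCommGroup T] [Module R T]
    (d : A →ₗ[R] B) (f : A →ₗ[R] T) (h : ker d ≤ ker f) :
    ↥(range d) →ₗ[R] T :=
  (Submodule.liftQ (ker d) f h).comp (d.quotKerEquivRange.symm : ↥(range d) →ₗ[R] A ⧸ ker d)

lemma descend_apply {A B T : Type u} [AddCommGroup A] [Module R A]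
    [AddCommGroup B] [Module R B] [AddCommGroup T] [Module R T]
    (d : A →ₗ[R] B) (f : A →ₗ[R] T) (h : ker d ≤ ker f) (a : A) (hm : d a ∈ range d) :
    descend d f h ⟨d a, hm⟩ = f a := by
  have h2 : (d.quotKerEquivRange.symm ⟨d a, hm⟩ : A ⧸ ker d) = Submodule.Quotient.mk a := by
    apply d.quotKerEquivRange.injective
    simp [LinearMap.quotKerEquivRange_apply_mk]
  simp only [descend, LinearMap.comp_apply]
  erw [h2]
  simp

section
variable (X Y : ModuleCat.{u} R) (P : ProjectiveResolution X)

/-- Ext¹ = 0 implies the extension property for the presentation coming from `P`. -/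
theorem extend_of_ext1
    (h : Subsingleton (((Ext R (ModuleCat.{u} R) 1).obj (Opposite.op X)).obj Y))
    (φ : ↥(ker ((P.π.f 0).hom : ↑(P.complex.X 0) →ₗ[R] ↑X)) →ₗ[R] Y) :
    ∃ ψ : ↑(P.complex.X 0) →ₗ[R] ↑Y,
      ∀ x : ↥(ker ((P.π.f 0).hom : ↑(P.complex.X 0) →ₗ[R] ↑X)), ψ x = φ x := by
  have hc := (subsingleton_ext_iff X Y P 0).1 h
  have hd : ∀ y, ((P.complex.d 1 0).hom : ↑(P.complex.X 1) →ₗ[R] ↑(P.complex.X 0)) y ∈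
      ker ((P.π.f 0).hom : ↑(P.complex.X 0) →ₗ[R] ↑X) := by
    intro y
    rw [← res_range_d10 X P]
    exact ⟨y, rfl⟩
  let f : P.complex.X 1 ⟶ Y :=
    ModuleCat.ofHom (φ.comp (codRestrict (ker ((P.π.f 0).hom : ↑(P.complex.X 0) →ₗ[R] ↑X))
      ((P.complex.d 1 0).hom : ↑(P.complex.X 1) →ₗ[R] ↑(P.complex.X 0)) hd))
  have hf : P.complex.d 2 1 ≫ f = 0 := by
    ext1; apply LinearMap.ext
    intro y
    show φ (codRestrict _ _ hd ((P.complex.d 2 1).hom y)) = 0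
    have hz : codRestrict (ker ((P.π.f 0).hom : ↑(P.complex.X 0) →ₗ[R] ↑X))
        ((P.complex.d 1 0).hom : ↑(P.complex.X 1) →ₗ[R] ↑(P.complex.X 0)) hd
        ((P.complex.d 2 1).hom y) = 0 := by
      apply Subtype.ext
      show (P.complex.d 1 0).hom ((P.complex.d 2 1).hom y) = 0
      exact congrArg (fun f => f.hom y) (P.complex.d_comp_d 2 1 0)
    rw [hz, map_zero]
  obtain ⟨g, hg⟩ := hc f hf
  refine ⟨g.hom, ?_⟩
  rintro ⟨x, hx⟩
  have hx' : x ∈ range ((P.complex.d 1 0).hom : ↑(P.complex.X 1) →ₗ[R] ↑(P.complex.X 0)) := by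
    rw [res_range_d10 X P]; exact hx
  obtain ⟨y, hy⟩ := hx'
  subst hy
  have h2 : g.hom ((P.complex.d 1 0).hom y) = f.hom y := congrArg (fun f => f.hom y) hg
  show g.hom ((P.complex.d 1 0).hom y) = _
  rw [h2]
  rfl

/-- The extension property for the presentation coming from `P` implies Ext¹ = 0. -/
theorem ext1_of_extend
    (hext : ∀ φ : ↥(ker ((P.π.f 0).hom : ↑(P.complex.X 0) →ₗ[R] ↑X)) →ₗ[R] Y,
      ∃ ψ : ↑(P.complex.X 0) →ₗ[R] ↑Y,
        ∀ x : ↥(ker ((P.π.f 0).hom : ↑(P.complex.X 0) →ₗ[R] ↑X)), ψ x = φ x) :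
    Subsingleton (((Ext R (ModuleCat.{u} R) 1).obj (Opposite.op X)).obj Y) := by
  rw [subsingleton_ext_iff X Y P 0]
  intro f hf
  set d1 : ↑(P.complex.X 1) →ₗ[R] ↑(P.complex.X 0) := (P.complex.d 1 0).hom with hd1
  have hker : ker d1 ≤ ker f.hom := by
    intro x hx
    have hr : range ((P.complex.d 2 1).hom : ↑(P.complex.X 2) →ₗ[R] ↑(P.complex.X 1)) = ker d1 :=
      res_range_d_succ X P 0
    rw [← hr] at hx
    obtain ⟨y, rfl⟩ := hx
    exact mem_ker.2 (congrArg (fun g => g.hom y) hf)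
  let φ₀ : ↥(range d1) →ₗ[R] ↑Y := descend d1 f.hom hker
  let φ : ↥(ker ((P.π.f 0).hom : ↑(P.complex.X 0) →ₗ[R] ↑X)) →ₗ[R] Y :=
    φ₀.comp (Submodule.inclusion (le_of_eq (res_range_d10 X P).symm))
  obtain ⟨ψ, hψ⟩ := hext φ
  refine ⟨ModuleCat.ofHom ψ, ?_⟩
  ext1; apply LinearMap.ext
  intro y
  have hmem : d1 y ∈ ker ((P.π.f 0).hom : ↑(P.complex.X 0) →ₗ[R] ↑X) := by
    rw [← res_range_d10 X P]; exact ⟨y, rfl⟩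
  show ψ (d1 y) = f.hom y
  rw [hψ ⟨d1 y, hmem⟩]
  show φ₀ (Submodule.inclusion _ ⟨d1 y, hmem⟩) = f.hom y
  have : Submodule.inclusion (le_of_eq (res_range_d10 X P).symm) ⟨d1 y, hmem⟩
      = ⟨d1 y, ⟨y, rfl⟩⟩ := rfl
  rw [this]
  exact descend_apply d1 f.hom hker y ⟨y, rfl⟩

/-- Ext² (X, -) = 0 implies the first syzygy is projective. -/
theorem proj_syzygy_of_ext2
    (h : ∀ (Z : Type u) [AddCommGroup Z] [Module R Z],
      Subsingleton (((Ext R (ModuleCat.{u} R) 2).obj (Opposite.op X)).obj (ModuleCat.of R Z))) :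
    Module.Projective R ↥(ker ((P.π.f 0).hom : ↑(P.complex.X 0) →ₗ[R] ↑X)) := by
  set d1 : ↑(P.complex.X 1) →ₗ[R] ↑(P.complex.X 0) := (P.complex.d 1 0).hom with hd1
  set d2 : ↑(P.complex.X 2) →ₗ[R] ↑(P.complex.X 1) := (P.complex.d 2 1).hom with hd2
  set K2 := ker d1 with hK2
  have hc := (subsingleton_ext_iff X (ModuleCat.of R ↥K2) P 1).1 (h ↥K2)
  have hdmem : ∀ y, d2 y ∈ K2 := by
    intro y
    rw [hK2, ← res_range_d_succ X P 0]
    exact ⟨y, rfl⟩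
  let f : P.complex.X 2 ⟶ ModuleCat.of R ↥K2 := ModuleCat.ofHom (codRestrict K2 d2 hdmem)
  have hf : P.complex.d 3 2 ≫ f = 0 := by
    ext1; apply LinearMap.ext
    intro y
    apply Subtype.ext
    show d2 ((P.complex.d 3 2).hom y) = 0
    exact congrArg (fun g => g.hom y) (P.complex.d_comp_d 3 2 1)
  obtain ⟨g, hg⟩ := hc f hf
  -- g : P.complex.X 1 ⟶ of R K2 is a retraction of K2 ↪ X 1
  have hr21 : range d2 = K2 := res_range_d_succ X P 0
  have hgk : ∀ k : ↥K2, g.hom (k : ↑(P.complex.X 1)) = k := by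
    rintro ⟨k, hk⟩
    rw [← hr21] at hk
    obtain ⟨y, rfl⟩ := hk
    have h2 : g.hom (d2 y) = f.hom y := congrArg (fun h => h.hom y) hg
    apply Subtype.ext
    show K2.subtype (g.hom (d2 y)) = d2 y
    rw [h2]
    rfl
  -- build the splitting of range d1
  have hkerg : K2 ≤ ker ((LinearMap.id - K2.subtype.comp g.hom) :
      ↑(P.complex.X 1) →ₗ[R] ↑(P.complex.X 1)) := by
    intro x hx
    refine mem_ker.2 ?_
    show x - K2.subtype (g.hom x) = 0
    rw [show (K2.subtype (g.hom x) : ↑(P.complex.X 1)) = x from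
      congrArg K2.subtype (hgk ⟨x, hx⟩)]
    exact sub_self x
  let τ : (↑(P.complex.X 1) ⧸ K2) →ₗ[R] ↑(P.complex.X 1) :=
    Submodule.liftQ K2 _ hkerg
  let e : (↑(P.complex.X 1) ⧸ ker d1) ≃ₗ[R] ↥(range d1) := d1.quotKerEquivRange
  let i : ↥(range d1) →ₗ[R] ↑(P.complex.X 1) := τ.comp (e.symm : ↥(range d1) →ₗ[R] _)
  let s : ↑(P.complex.X 1) →ₗ[R] ↥(range d1) := d1.rangeRestrict
  have hsplit : s.comp i = LinearMap.id := by
    apply LinearMap.ext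
    rintro ⟨k, hk⟩
    obtain ⟨y, rfl⟩ := hk
    have he : (e.symm ⟨d1 y, ⟨y, rfl⟩⟩ : ↑(P.complex.X 1) ⧸ ker d1)
        = Submodule.Quotient.mk y := by
      apply e.injective
      simp [e, LinearMap.quotKerEquivRange_apply_mk]
      exact Subtype.ext (LinearMap.quotKerEquivRange_apply_mk d1 y).symm
    apply Subtype.ext
    show d1 (τ (e.symm ⟨d1 y, ⟨y, rfl⟩⟩)) = d1 y
    rw [he]
    show d1 (y - K2.subtype (g.hom y)) = d1 y
    have hgy : (K2.subtype (g.hom y) : ↑(P.complex.X 1)) ∈ K2 :=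
      (g.hom y).2
    rw [map_sub, mem_ker.1 hgy, sub_zero]
  have hproj1 : Module.Projective R ↑(P.complex.X 1) := by
    have h := P.projective 1
    exact (IsProjective.iff_projective (R := R) (P := ↑(P.complex.X 1))).2 h
  have hrange : Module.Projective R ↥(range d1) := Module.Projective.of_split i s hsplit
  have heq : range d1 = ker ((P.π.f 0).hom : ↑(P.complex.X 0) →ₗ[R] ↑X) := res_range_d10 X P
  exact Module.Projective.of_equiv (LinearEquiv.ofEq _ _ heq)
end

/-- `Ext^n_R(M, N)` via the derived functor `Ext` on `ModuleCat R`. -/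
abbrev extGroup (R : Type u) [CommRing R] (n : ℕ) (M N : Type u)
    [AddCommGroup M] [Module R M] [AddCommGroup N] [Module R N] : Type u :=
  ((Ext R (ModuleCat.{u} R) n).obj (Opposite.op (ModuleCat.of R M))).obj (ModuleCat.of R N)

/-- A tight submodule of a Baer module is Baer: if `M` is Baer of projective
dimension `≤ 1` and `N ≤ M` with `pd_R (M/N) ≤ 1`, then `N` is Baer. -/
theorem stmt11 (R : Type u) [CommRing R]
    (M : Type u) [AddCommGroup M] [Module R M]
    (hBaer : ∀ (T : Type u) [AddCommGroup T] [Module R T], Module.IsTorsion R T →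
      Subsingleton (extGroup R 1 M T))
    (hpdM : ∀ (X : Type u) [AddCommGroup X] [Module R X], Subsingleton (extGroup R 2 M X))
    (N : Submodule R M)
    (hpdQ : ∀ (X : Type u) [AddCommGroup X] [Module R X],
      Subsingleton (extGroup R 2 (M ⧸ N) X)) :
    ∀ (T : Type u) [AddCommGroup T] [Module R T], Module.IsTorsion R T →
      Subsingleton (extGroup R 1 N T) := by
  intro T _ _ hT
  classical
  let Mc : ModuleCat.{u} R := ModuleCat.of R M
  let Qc : ModuleCat.{u} R := ModuleCat.of R (M ⧸ N)
  let Nc : ModuleCat.{u} R := ModuleCat.of R ↥N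
  let Tc : ModuleCat.{u} R := ModuleCat.of R T
  let PM : ProjectiveResolution Mc := ProjectiveResolution.of Mc
  let PQ : ProjectiveResolution Qc := ProjectiveResolution.of Qc
  let PN : ProjectiveResolution Nc := ProjectiveResolution.of Nc
  -- the projective presentation of M
  let π : ↑(PM.complex.X 0) →ₗ[R] M := (PM.π.f 0).hom
  have hπ : Surjective π := surj_pi0 Mc PM
  -- extension property for S := ker π into T
  have hS_ext : ∀ φ : ↥(ker π) →ₗ[R] T, ∃ ψ : ↑(PM.complex.X 0) →ₗ[R] T,
      ∀ x : ↥(ker π), ψ x = φ x :=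
    fun φ => extend_of_ext1 Mc Tc PM (hBaer T hT) φ
  -- the first syzygy of Q is projective
  have hK1 : Module.Projective R ↥(ker ((PQ.π.f 0).hom : ↑(PQ.complex.X 0) →ₗ[R] (M ⧸ N))) :=
    proj_syzygy_of_ext2 Qc PQ (fun Z _ _ => hpdQ Z)
  -- the pullback presentation of N
  let q1 : ↑(PM.complex.X 0) →ₗ[R] (M ⧸ N) := N.mkQ.comp π
  have hq1 : Surjective q1 := (Submodule.mkQ_surjective N).comp hπ
  let πQ : ↑(PQ.complex.X 0) →ₗ[R] (M ⧸ N) := (PQ.π.f 0).hom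
  have hπQ : Surjective πQ := surj_pi0 Qc PQ
  haveI hPM0 : Module.Projective R ↑(PM.complex.X 0) := module_projective_res Mc PM 0
  haveI hPQ0 : Module.Projective R ↑(PQ.complex.X 0) := module_projective_res Qc PQ 0
  have hG : Module.Projective R ↥(ker q1) :=
    proj_ker_of_pullback q1 πQ hq1 hπQ hK1
  -- the map ker q1 → N
  have hmemN : ∀ x : ↑(PM.complex.X 0), x ∈ ker q1 → π x ∈ N := by
    intro x hx
    exact (Submodule.Quotient.mk_eq_zero N).1 hx
  let ρ : ↥(ker q1) →ₗ[R] ↥N := π.restrict hmemN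
  have hρ : Surjective ρ := by
    rintro ⟨n, hn⟩
    obtain ⟨x, hx⟩ := hπ n
    have hxG : x ∈ ker q1 := by
      show N.mkQ (π x) = 0
      rw [hx]
      exact (Submodule.Quotient.mk_eq_zero N).2 hn
    exact ⟨⟨x, hxG⟩, Subtype.ext hx⟩
  -- extension property for the presentation ρ of N
  have hρ_ext : ∀ φ : ↥(ker ρ) →ₗ[R] T, ∃ ψ : ↥(ker q1) →ₗ[R] T,
      ∀ x : ↥(ker ρ), ψ x = φ x := by
    intro φ
    -- the inclusion of ker π into ker ρ
    have hj1 : ∀ x : ↥(ker π), (x : ↑(PM.complex.X 0)) ∈ ker q1 := by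
      rintro ⟨x, hx⟩
      show N.mkQ (π x) = 0
      rw [mem_ker.1 hx, map_zero]
    have hj2 : ∀ x : ↥(ker π),
        codRestrict (ker q1) (ker π).subtype hj1 x ∈ ker ρ := by
      rintro ⟨x, hx⟩
      refine mem_ker.2 (Subtype.ext ?_)
      show π x = 0
      exact mem_ker.1 hx
    let j : ↥(ker π) →ₗ[R] ↥(ker ρ) :=
      codRestrict (ker ρ) (codRestrict (ker q1) (ker π).subtype hj1) hj2
    obtain ⟨ψ₀, hψ₀⟩ := hS_ext (φ.comp j)
    refine ⟨ψ₀.comp (ker q1).subtype, ?_⟩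
    rintro ⟨⟨x, hxq⟩, hxρ⟩
    have hxS : x ∈ ker π := by
      have := mem_ker.1 hxρ
      have h2 : π x = 0 := congrArg Subtype.val this
      exact mem_ker.2 h2
    have := hψ₀ ⟨x, hxS⟩
    show ψ₀ x = φ ⟨⟨x, hxq⟩, hxρ⟩
    rw [this]
    show φ (j ⟨x, hxS⟩) = φ ⟨⟨x, hxq⟩, hxρ⟩
    congr 1
  -- transfer to the resolution presentation of N and conclude
  haveI hPN0 : Module.Projective R ↑(PN.complex.X 0) := module_projective_res Nc PN 0
  haveI hGproj : Module.Projective R ↥(ker q1) := hG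
  have hext_PN := extend_transfer ((PN.π.f 0).hom : ↑(PN.complex.X 0) →ₗ[R] ↥N) ρ
    (surj_pi0 Nc PN) hρ hρ_ext
  exact ext1_of_extend Nc Tc PN hext_PN
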